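/- Let w : ℕ → (0,∞) with w(n−1)/w(n) → 1, z(1) = Σ_n w(n) < ∞, and Z_{L,N}/w(N) → L z(1)^{L−1} for some fixed L ≥ 2. Then the canonical conditional product measures π_{L,N} exhibit condensation: lim_{K→∞} lim_{N→∞} π_{L,N}[M_L ≥ N−K] = 1, where M_L(η) = maxₓ ηₓ. -/

import Mathlib

open Filter Topology

/-- `L`-fold convolution of the weights: `Z_{L,N} = Σ_{η ∈ ℕ^L, Ση = N} Π_x w(η_x)`. -/
noncomputable def Zconv (w : ℕ → ℝ) (L N : ℕ) : ℝ :=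
  ∑ η ∈ Finset.Nat.antidiagonalTuple L N, ∏ x, w (η x)

/-- Probability under `π_{L,N}` that the maximum occupation number is at least `N - K`. -/
noncomputable def probMaxGe (w : ℕ → ℝ) (L N K : ℕ) : ℝ :=
  (∑ η ∈ Finset.Nat.antidiagonalTuple L N,
      if N - K ≤ Finset.univ.sup η then ∏ x, w (η x) else 0) / Zconv w L N

lemma sum_adT_succ (m N : ℕ) (f : (Fin (m+1) → ℕ) → ℝ) :
    ∑ η ∈ Finset.Nat.antidiagonalTuple (m+1) N, f η
    = ∑ p ∈ Finset.HasAntidiagonal.antidiagonal N, ∑ τ ∈ Finset.Nat.antidiagonalTuple m p.2, f (Fin.cons p.1 τ) := by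
  rw [Finset.sum_sigma']
  apply Finset.sum_nbij' (i := fun η => (⟨(η 0, ∑ i, Fin.tail η i), Fin.tail η⟩ :
      (_ : ℕ × ℕ) × (Fin m → ℕ))) (j := fun p => Fin.cons p.1.1 p.2)
  · intro η hη
    rw [Finset.Nat.mem_antidiagonalTuple] at hη
    simp only [Finset.mem_sigma, Finset.Nat.mem_antidiagonalTuple, Finset.HasAntidiagonal.mem_antidiagonal]
    exact ⟨by rw [← hη, Fin.sum_univ_succ]; rfl, trivial⟩
  · intro p hp
    rw [Finset.mem_sigma, Finset.Nat.mem_antidiagonalTuple, Finset.HasAntidiagonal.mem_antidiagonal] at hp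
    rw [Finset.Nat.mem_antidiagonalTuple, Fin.sum_univ_succ]
    simp [hp.2, hp.1]
  · intro η hη; simp [Fin.cons_self_tail]
  · intro p hp
    rw [Finset.mem_sigma, Finset.Nat.mem_antidiagonalTuple, Finset.HasAntidiagonal.mem_antidiagonal] at hp
    simp [Fin.tail_cons, hp.2]
  · intro η hη; simp [Fin.cons_self_tail]

lemma Zconv_succ (w : ℕ → ℝ) (m N : ℕ) :
    Zconv w (m+1) N = ∑ p ∈ Finset.HasAntidiagonal.antidiagonal N, w p.1 * Zconv w m p.2 := by
  rw [Zconv, sum_adT_succ]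
  refine Finset.sum_congr rfl fun p _ => ?_
  rw [Zconv, Finset.mul_sum]
  refine Finset.sum_congr rfl fun τ _ => ?_
  rw [Fin.prod_univ_succ]
  simp

lemma Zconv_nonneg (w : ℕ → ℝ) (hw : ∀ n, 0 < w n) (m N : ℕ) : 0 ≤ Zconv w m N :=
  Finset.sum_nonneg fun η _ => Finset.prod_nonneg fun x _ => (hw _).le

lemma hasSum_Zconv (w : ℕ → ℝ) (hw : ∀ n, 0 < w n) (hz : Summable w) (m : ℕ) :
    HasSum (Zconv w m) ((∑' n, w n) ^ m) := by
  induction m with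
  | zero =>
    have : Zconv w 0 = fun N => if N = 0 then 1 else 0 := by
      funext N
      cases N with
      | zero => simp [Zconv, Finset.Nat.antidiagonalTuple_zero_zero]
      | succ n => simp [Zconv, Finset.Nat.antidiagonalTuple_zero_succ]
    rw [this, pow_zero]
    exact hasSum_ite_eq 0 1
  | succ m ih =>
    have hsum : Summable (Zconv w m) := ih.summable
    have hnw : Summable fun n => ‖w n‖ := by
      simpa [Real.norm_eq_abs, abs_of_pos (hw _)] using hz
    have hnZ : Summable fun n => ‖Zconv w m n‖ := by
      simpa [Real.norm_eq_abs, abs_of_nonneg (Zconv_nonneg w hw m _)] using hsum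
    have hsum2 : Summable fun N => ∑ p ∈ Finset.HasAntidiagonal.antidiagonal N, w p.1 * Zconv w m p.2 :=
      summable_sum_mul_antidiagonal_of_summable_norm' hnw hz hnZ hsum
    have heq : ((∑' n, w n) * ∑' n, Zconv w m n)
        = ∑' N, ∑ p ∈ Finset.HasAntidiagonal.antidiagonal N, w p.1 * Zconv w m p.2 :=
      tsum_mul_tsum_eq_tsum_sum_antidiagonal_of_summable_norm' hnw hz hnZ hsum
    have : HasSum (fun N => ∑ p ∈ Finset.HasAntidiagonal.antidiagonal N, w p.1 * Zconv w m p.2)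
        ((∑' n, w n) ^ (m+1)) := by
      have := hsum2.hasSum
      rw [← heq, ih.tsum_eq] at this
      convert this using 2
      ring
    simpa only [← Zconv_succ] using this

lemma ratio_tendsto (w : ℕ → ℝ) (hw : ∀ n, 0 < w n)
    (hreg : Tendsto (fun n => w n / w (n + 1)) atTop (𝓝 1)) (n : ℕ) :
    Tendsto (fun N => w (N - n) / w N) atTop (𝓝 1) := by
  induction n with
  | zero => simpa [div_self (hw _).ne'] using tendsto_const_nhds
  | succ n ih =>
    have h1 : Tendsto (fun N => w (N - (n+1)) / w (N - n)) atTop (𝓝 1) :=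
      hreg.comp (tendsto_sub_atTop_nat (n+1)) |>.congr' (by
        filter_upwards [eventually_ge_atTop (n+1)] with N hN
        have : N - (n+1) + 1 = N - n := by omega
        simp [Function.comp, this])
    have := h1.mul ih
    rw [one_mul] at this
    refine this.congr' ?_
    filter_upwards with N
    rw [div_mul_div_comm, mul_comm (w (N - n)) (w N), mul_div_mul_right _ _ (hw (N - n)).ne']

lemma num_eq (w : ℕ → ℝ) (hw : ∀ n, 0 < w n) (m K N : ℕ) (hN : 2*K + 1 ≤ N) :
    (∑ η ∈ Finset.Nat.antidiagonalTuple (m+1) N,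
      if N - K ≤ Finset.univ.sup η then ∏ x, w (η x) else 0)
    = (m+1 : ℝ) * ∑ n ∈ Finset.range (K+1), w (N - n) * Zconv w m n := by
  have key : ∀ η : Fin (m+1) → ℕ, (∑ i, η i = N) →
      (if N - K ≤ Finset.univ.sup η then (∏ x, w (η x)) else 0)
        = ∑ x : Fin (m+1), if N - K ≤ η x then (∏ y, w (η y)) else 0 := by
    intro η hη
    by_cases h : ∃ x, N - K ≤ η x
    · obtain ⟨x0, hx0⟩ := h
      have huniq : ∀ x, (N - K ≤ η x) ↔ x = x0 := by
        intro x
        constructor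
        · intro hx
          by_contra hne
          have h2 : η x + η x0 ≤ N := by
            have hs := Finset.sum_le_sum_of_subset (f := η)
              (Finset.subset_univ ({x, x0} : Finset (Fin (m+1))))
            rw [Finset.sum_pair hne, hη] at hs
            exact hs
          omega
        · rintro rfl; exact hx0
      have hsup : N - K ≤ Finset.univ.sup η :=
        le_trans hx0 (Finset.le_sup (Finset.mem_univ x0))
      rw [if_pos hsup]
      simp only [huniq]
      rw [Finset.sum_ite_eq' Finset.univ x0]
      simp
    · push_neg at h
      have hsup : ¬ (N - K ≤ Finset.univ.sup η) := by
        rw [Finset.le_sup_iff (by simp; omega : (⊥ : ℕ) < N - K)]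
        push_neg
        intro x _
        exact h x
      rw [if_neg hsup]
      symm
      exact Finset.sum_eq_zero fun x _ => if_neg (not_le.mpr (h x))
  rw [Finset.sum_congr rfl (fun η hη => key η (Finset.Nat.mem_antidiagonalTuple.mp hη)),
    Finset.sum_comm]
  have hswap : ∀ x : Fin (m+1),
      (∑ η ∈ Finset.Nat.antidiagonalTuple (m+1) N,
        if N - K ≤ η x then (∏ y, w (η y)) else 0)
    = ∑ η ∈ Finset.Nat.antidiagonalTuple (m+1) N,
        if N - K ≤ η 0 then (∏ y, w (η y)) else 0 := by
    intro x
    apply Finset.sum_nbij' (i := fun η => η ∘ Equiv.swap x 0) (j := fun η => η ∘ Equiv.swap x 0)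
    · intro η hη
      rw [Finset.Nat.mem_antidiagonalTuple] at hη ⊢
      rw [← hη]
      exact Equiv.sum_comp (Equiv.swap x 0) η
    · intro η hη
      rw [Finset.Nat.mem_antidiagonalTuple] at hη ⊢
      rw [← hη]
      exact Equiv.sum_comp (Equiv.swap x 0) η
    · intro η _; funext i; simp [Function.comp, Equiv.swap_apply_self]
    · intro η _; funext i; simp [Function.comp, Equiv.swap_apply_self]
    · intro η _
      have h0 : (η ∘ Equiv.swap x 0) 0 = η x := by simp [Function.comp]
      have hp : (∏ y, w ((η ∘ Equiv.swap x 0) y)) = ∏ y, w (η y) :=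
        Equiv.prod_comp (Equiv.swap x 0) (fun y => w (η y))
      rw [h0, hp]
  rw [Finset.sum_congr rfl (fun x _ => hswap x), Finset.sum_const, Finset.card_univ,
    Fintype.card_fin, nsmul_eq_mul]
  congr 1
  · push_cast; ring
  rw [sum_adT_succ]
  have hinner : ∀ p ∈ Finset.HasAntidiagonal.antidiagonal N,
      (∑ τ ∈ Finset.Nat.antidiagonalTuple m p.2,
        if N - K ≤ (Fin.cons p.1 τ : Fin (m+1) → ℕ) 0 then ∏ y, w ((Fin.cons p.1 τ : Fin (m+1) → ℕ) y) else 0)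
      = if N - K ≤ p.1 then w p.1 * Zconv w m p.2 else 0 := by
    intro p _
    by_cases h : N - K ≤ p.1
    · rw [if_pos h, Zconv, Finset.mul_sum]
      refine Finset.sum_congr rfl fun τ _ => ?_
      rw [if_pos (by simpa using h), Fin.prod_univ_succ]
      simp
    · rw [if_neg h]
      exact Finset.sum_eq_zero fun τ _ => if_neg (by simpa using h)
  rw [Finset.sum_congr rfl hinner, Finset.Nat.sum_antidiagonal_eq_sum_range_succ_mk,
    ← Finset.sum_range_reflect]
  have hcongr : ∀ j ∈ Finset.range (N+1),
      (if N - K ≤ N + 1 - 1 - j then w (N + 1 - 1 - j) * Zconv w m (N - (N + 1 - 1 - j)) else 0)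
      = if j ≤ K then w (N - j) * Zconv w m j else 0 := by
    intro j hj
    rw [Finset.mem_range] at hj
    have h1 : N + 1 - 1 - j = N - j := by omega
    have h2 : N - (N - j) = j := by omega
    have h3 : (N - K ≤ N - j) ↔ j ≤ K := by omega
    rw [h1, h2]
    by_cases h : j ≤ K
    · rw [if_pos (h3.mpr h), if_pos h]
    · rw [if_neg (fun hc => h (h3.mp hc)), if_neg h]
  rw [Finset.sum_congr rfl hcongr]
  rw [← Finset.sum_subset (Finset.range_subset_range.mpr (by omega : K + 1 ≤ N + 1))
    (fun j _ hj => if_neg (by rw [Finset.mem_range] at hj; omega))]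
  exact Finset.sum_congr rfl fun j hj => if_pos (by rw [Finset.mem_range] at hj; omega)

/-- Sub-exponential weights (with `z(1) < ∞` and `Z_{L,N}/w(N) → L z(1)^{L-1}`) imply
condensation: `lim_{K→∞} lim_{N→∞} π_{L,N}[M_L ≥ N-K] = 1`. -/
theorem condensation_of_subexponential (w : ℕ → ℝ) (hw : ∀ n, 0 < w n) (hw0 : w 0 = 1)
    (hreg : Tendsto (fun n => w n / w (n + 1)) atTop (𝓝 1))
    (hz : Summable w) (L : ℕ) (hL : 2 ≤ L)
    (hsub : Tendsto (fun N => Zconv w L N / w N) atTop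
      (𝓝 ((L : ℝ) * (∑' n, w n) ^ (L - 1)))) :
    ∃ a : ℕ → ℝ,
      (∀ K : ℕ, Tendsto (fun N => probMaxGe w L N K) atTop (𝓝 (a K))) ∧
      Tendsto a atTop (𝓝 1) := by
  obtain ⟨m, rfl⟩ : ∃ m, L = m + 1 := ⟨L - 1, by omega⟩
  set z := ∑' n, w n with hzdef
  have hz1 : (1:ℝ) ≤ z := hw0 ▸ Summable.le_tsum hz 0 (fun i _ => (hw i).le)
  have hzpos : (0:ℝ) < z := lt_of_lt_of_le one_pos hz1
  have hZsum := hasSum_Zconv w hw hz m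
  have hden : Tendsto (fun N => Zconv w (m+1) N / w N) atTop (𝓝 ((m+1 : ℝ) * z ^ m)) := by
    have : ((m+1 : ℕ) : ℝ) * z ^ ((m+1) - 1) = (m+1 : ℝ) * z ^ m := by push_cast; ring_nf
    rw [← this]
    exact hsub
  have hdz : ((m+1 : ℝ) * z ^ m) ≠ 0 := by positivity
  refine ⟨fun K => ((m+1 : ℝ) * ∑ n ∈ Finset.range (K+1), Zconv w m n) /
      ((m+1 : ℝ) * z ^ m), fun K => ?_, ?_⟩
  · have hnum : Tendsto
        (fun N => ((m+1 : ℝ) * ∑ n ∈ Finset.range (K+1), w (N - n) * Zconv w m n) / w N)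
        atTop (𝓝 ((m+1 : ℝ) * ∑ n ∈ Finset.range (K+1), Zconv w m n)) := by
      have heq : ∀ N, ((m+1 : ℝ) * ∑ n ∈ Finset.range (K+1), w (N - n) * Zconv w m n) / w N
          = (m+1 : ℝ) * ∑ n ∈ Finset.range (K+1), (w (N - n) / w N) * Zconv w m n := by
        intro N
        rw [mul_div_assoc, Finset.sum_div]
        congr 1
        exact Finset.sum_congr rfl fun n _ => by ring
      have hlim : Tendsto
          (fun N => (m+1 : ℝ) * ∑ n ∈ Finset.range (K+1), (w (N - n) / w N) * Zconv w m n)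
          atTop (𝓝 ((m+1 : ℝ) * ∑ n ∈ Finset.range (K+1), Zconv w m n)) := by
        apply Tendsto.const_mul
        have := tendsto_finset_sum (Finset.range (K+1))
          (fun n _ => (ratio_tendsto w hw hreg n).mul_const (Zconv w m n))
        simpa using this
      exact hlim.congr (fun N => (heq N).symm)
    have hmain := hnum.div hden hdz
    apply hmain.congr'
    filter_upwards [eventually_ge_atTop (2*K+1)] with N hN
    simp only [Pi.div_apply]
    rw [probMaxGe, num_eq w hw m K N hN, div_div_div_cancel_right₀ (hw N).ne']
  · have hS : Tendsto (fun K => ∑ n ∈ Finset.range (K+1), Zconv w m n) atTop (𝓝 (z ^ m)) := by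
      have h1 := hZsum.tendsto_sum_nat
      have := h1.comp (tendsto_add_atTop_nat 1)
      exact this.congr fun K => rfl
    have h2 := (hS.const_mul ((m+1:ℝ))).div_const ((m+1:ℝ) * z ^ m)
    rw [div_self hdz] at h2
    exact h2
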